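/- Let E be the (unique) minimum-volume ellipsoid centered at the origin containing a compact set B that spans ℝ^d, and suppose after a linear change of coordinates E is the unit ball. Then there exist a finite set X ⊆ B and nonnegative reals α_x for x ∈ X with Σ_{x∈X} α_x · x x^T = (1/d)·I and Σ_{x∈X} α_x = 1. -/

import Mathlib

open Matrix Finset Module

attribute [local instance] Matrix.normedAddCommGroup Matrix.normedSpace
private theorem isCompact_convexHull_of_isCompact {E : Type*} [NormedAddCommGroup E]
    [NormedSpace ℝ E] [FiniteDimensional ℝ E] {s : Set E} (hs : IsCompact s) :
    IsCompact (convexHull ℝ s) := by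
  classical
  rcases s.eq_empty_or_nonempty with rfl | ⟨x₀, hx₀⟩
  · simpa [convexHull_empty] using isCompact_empty
  set m := finrank ℝ E + 1 with hm
  have hφ : Continuous (fun p : (Fin m → ℝ) × (Fin m → E) => ∑ i, p.1 i • p.2 i) := by
    refine continuous_finset_sum _ fun i _ => ?_
    exact ((continuous_apply i).comp continuous_fst).smul
      ((continuous_apply i).comp continuous_snd)
  have himg : convexHull ℝ s =
      (fun p : (Fin m → ℝ) × (Fin m → E) => ∑ i, p.1 i • p.2 i) ''
        (stdSimplex ℝ (Fin m) ×ˢ Set.univ.pi fun _ => s) := by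
    apply Set.Subset.antisymm
    · intro x hx
      obtain ⟨ι, hfin, z, w, hzs, hai, hw0, hw1, hsum⟩ :=
        eq_pos_convex_span_of_mem_convexHull hx
      letI := hfin
      have hcard : Fintype.card ι ≤ m := by
        refine le_trans hai.card_le_finrank_succ ?_
        have := Submodule.finrank_le (vectorSpan ℝ (Set.range z))
        omega
      let e : ι ↪ Fin m :=
        (Fintype.equivFin ι).toEmbedding.trans (Fin.castLEEmb hcard)
      set w' : Fin m → ℝ := fun j => ∑ i ∈ univ.filter (fun i => e i = j), w i with hw'
      set z' : Fin m → E := fun j => if h : ∃ i, e i = j then z h.choose else x₀ with hz'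
      have key : ∀ j, w' j • z' j = ∑ i ∈ univ.filter (fun i => e i = j), w i • z i := by
        intro j
        rw [hw']
        simp only
        rw [Finset.sum_smul]
        refine Finset.sum_congr rfl fun i hi => ?_
        have hij : e i = j := (Finset.mem_filter.mp hi).2
        have hex : ∃ i', e i' = j := ⟨i, hij⟩
        have hch : hex.choose = i := e.injective (hex.choose_spec.trans hij.symm)
        rw [hz']
        simp only [dif_pos hex, hch]
      refine ⟨(w', z'), ⟨⟨fun j => Finset.sum_nonneg fun i _ => (hw0 i).le, ?_⟩, ?_⟩, ?_⟩
      · rw [hw']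
        simp only
        rw [Finset.sum_fiberwise_of_maps_to (fun i _ => Finset.mem_univ (e i)) w]
        exact hw1
      · intro j _
        rw [hz']
        simp only
        split
        · next h => exact hzs ⟨h.choose, rfl⟩
        · exact hx₀
      · calc ∑ j, w' j • z' j
            = ∑ j, ∑ i ∈ univ.filter (fun i => e i = j), w i • z i :=
              Finset.sum_congr rfl fun j _ => key j
          _ = ∑ i, w i • z i :=
              Finset.sum_fiberwise_of_maps_to (fun i _ => Finset.mem_univ (e i)) _
          _ = x := hsum
    · rintro - ⟨⟨w, z⟩, ⟨hw, hz⟩, rfl⟩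
      exact (convex_convexHull ℝ s).sum_mem (fun i _ => hw.1 i) hw.2
        (fun i _ => subset_convexHull ℝ s (hz i (Set.mem_univ i)))
  rw [himg]
  exact ((isCompact_stdSimplex (𝕜 := ℝ) (ι := Fin m)).prod (isCompact_univ_pi fun _ => hs)).image hφ
private theorem john_mem (d : ℕ) (hd : 0 < d) (B : Set (Fin d → ℝ)) (hB : IsCompact B)
    (hball : ∀ x ∈ B, ∑ i, x i ^ 2 ≤ 1)
    (hmin : ∀ Q : Matrix (Fin d) (Fin d) ℝ, Q.PosDef →
      (∀ x ∈ B, dotProduct x (Q.mulVec x) ≤ 1) → Q.det ≤ 1) :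
    ((1 : ℝ)/d) • (1 : Matrix (Fin d) (Fin d) ℝ) ∈
      convexHull ℝ ((fun x => Matrix.vecMulVec x x) '' B) := by
  classical
  set f : (Fin d → ℝ) → Matrix (Fin d) (Fin d) ℝ := fun x => vecMulVec x x with hf
  by_contra hc
  have hcont : Continuous f := by
    rw [hf]
    exact continuous_matrix fun i j => (continuous_apply i).mul (continuous_apply j)
  have hK : IsCompact (convexHull ℝ (f '' B)) :=
    isCompact_convexHull_of_isCompact (hB.image hcont)
  haveI : LocallyConvexSpace ℝ (Matrix (Fin d) (Fin d) ℝ) :=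
    inferInstanceAs (LocallyConvexSpace ℝ (Fin d → Fin d → ℝ))
  obtain ⟨ℓ, u, hu1, hu2⟩ :=
    geometric_hahn_banach_closed_point (convex_convexHull ℝ _) hK.isClosed hc
  set H : Matrix (Fin d) (Fin d) ℝ :=
    Matrix.of (fun i j => (ℓ (Matrix.single i j 1) + ℓ (Matrix.single j i 1)) / 2) with hH
  have hℓ : ∀ A : Matrix (Fin d) (Fin d) ℝ,
      ℓ A = ∑ i, ∑ j, A i j * ℓ (Matrix.single i j 1) := by
    intro A
    conv_lhs => rw [matrix_eq_sum_single A]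
    rw [map_sum]
    refine Finset.sum_congr rfl fun i _ => ?_
    rw [map_sum]
    refine Finset.sum_congr rfl fun j _ => ?_
    have : Matrix.single i j (A i j) = (A i j) • Matrix.single i j 1 := by
      rw [smul_single, smul_eq_mul, mul_one]
    rw [this, _root_.map_smul, smul_eq_mul]
  have hquad : ∀ x : Fin d → ℝ, dotProduct x (H.mulVec x) = ℓ (f x) := by
    intro x
    rw [hℓ (f x)]
    have h1 : dotProduct x (H.mulVec x) = ∑ i, ∑ j, x i * (H i j * x j) := by
      simp only [dotProduct, mulVec, Finset.mul_sum]
    rw [h1]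
    have h2 : ∀ i j, x i * (H i j * x j) =
        (x i * x j * ℓ (Matrix.single i j 1)) / 2
          + (x i * x j * ℓ (Matrix.single j i 1)) / 2 := by
      intro i j
      rw [hH]
      simp only [of_apply]
      ring
    simp only [h2, Finset.sum_add_distrib]
    have h3 : ∑ i, ∑ j, (x i * x j * ℓ (Matrix.single j i 1)) / 2
        = ∑ i, ∑ j, (x i * x j * ℓ (Matrix.single i j 1)) / 2 := by
      rw [Finset.sum_comm]
      exact Finset.sum_congr rfl fun i _ => Finset.sum_congr rfl fun j _ => by ring
    rw [h3, ← Finset.sum_add_distrib]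
    simp only [← Finset.sum_add_distrib]
    refine Finset.sum_congr rfl fun i _ => Finset.sum_congr rfl fun j _ => ?_
    have : (f x) i j = x i * x j := by rw [hf]; simp [vecMulVec_apply]
    rw [this]
    ring
  have htr : H.trace = ℓ 1 := by
    have h1 : ℓ (1 : Matrix (Fin d) (Fin d) ℝ)
        = ∑ i, ∑ j, (1 : Matrix (Fin d) (Fin d) ℝ) i j * ℓ (Matrix.single i j 1) := hℓ 1
    rw [h1]
    rw [Matrix.trace]
    refine Finset.sum_congr rfl fun i _ => ?_
    rw [Finset.sum_eq_single i]
    · simp [hH, Matrix.one_apply]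
    · intro j _ hji
      simp [Matrix.one_apply, Ne.symm hji]
    · simp
  -- bound on quadratic form
  set C : ℝ := ∑ i, ∑ j, |H i j| with hC
  have hCnn : 0 ≤ C := Finset.sum_nonneg fun i _ => Finset.sum_nonneg fun j _ => abs_nonneg _
  have hCb : ∀ x : Fin d → ℝ, |dotProduct x (H.mulVec x)| ≤ C * ∑ i, x i ^ 2 := by
    intro x
    set s : ℝ := ∑ i, x i ^ 2 with hs
    have hsnn : 0 ≤ s := Finset.sum_nonneg fun i _ => sq_nonneg _
    have key : ∀ i j : Fin d, |x i| * |x j| ≤ s := by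
      intro i j
      have h1 : x i ^ 2 ≤ s := Finset.single_le_sum (fun k _ => sq_nonneg (x k)) (Finset.mem_univ i)
      have h2 : x j ^ 2 ≤ s := Finset.single_le_sum (fun k _ => sq_nonneg (x k)) (Finset.mem_univ j)
      nlinarith [sq_abs (x i), sq_abs (x j), sq_nonneg (|x i| - |x j|)]
    calc |dotProduct x (H.mulVec x)| = |∑ i, ∑ j, x i * (H i j * x j)| := by
          simp only [dotProduct, mulVec, Finset.mul_sum]
      _ ≤ ∑ i, |∑ j, x i * (H i j * x j)| := Finset.abs_sum_le_sum_abs _ _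
      _ ≤ ∑ i, ∑ j, |x i * (H i j * x j)| :=
          Finset.sum_le_sum fun i _ => Finset.abs_sum_le_sum_abs _ _
      _ ≤ ∑ i, ∑ j, |H i j| * s := by
          refine Finset.sum_le_sum fun i _ => Finset.sum_le_sum fun j _ => ?_
          have : |x i * (H i j * x j)| = |H i j| * (|x i| * |x j|) := by
            rw [abs_mul, abs_mul]; ring
          rw [this]
          exact mul_le_mul_of_nonneg_left (key i j) (abs_nonneg _)
      _ = C * s := by simp only [hC, Finset.sum_mul]
  -- d * u < trace H
  have hdu : d * u < H.trace := by
    rw [htr]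
    have : ℓ ((1/(d:ℝ)) • 1) = (1/(d:ℝ)) * ℓ 1 := by rw [ℓ.map_smul, smul_eq_mul]
    rw [this] at hu2
    have hd' : (0:ℝ) < d := Nat.cast_pos.mpr hd
    rw [div_mul_eq_mul_div, one_mul, lt_div_iff₀ hd'] at hu2
    linarith [hu2]
  -- find suitable t
  obtain ⟨t, htC, htu, ht0, htg⟩ : ∃ t : ℝ, t * C < 1 ∧ 0 < 1 + t * u ∧ 0 < t ∧
      (1 + t * u) ^ d < (1 + t • H).det := by
    set P : Polynomial ℝ := (Matrix.det (1 + (Polynomial.X : Polynomial ℝ) • H.map Polynomial.C)).divX.divX with hP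
    have hφ : ∀ t : ℝ, (1 + t • H).det = 1 + H.trace * t + P.eval t * t ^ 2 :=
      fun t => Matrix.det_one_add_smul t H
    set g : ℝ → ℝ := fun t => (1 + H.trace * t + P.eval t * t ^ 2) - (1 + t * u) ^ d with hg
    have hg0 : g 0 = 0 := by simp [hg]
    have hder : HasDerivAt g (H.trace - d * u) 0 := by
      have d1 : HasDerivAt (fun t : ℝ => 1 + H.trace * t + P.eval t * t ^ 2) H.trace 0 := by
        have a1 : HasDerivAt (fun t : ℝ => H.trace * t) H.trace 0 :=
          (hasDerivAt_id 0).const_mul H.trace |>.congr_deriv (by ring)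
        have a2 : HasDerivAt (fun t : ℝ => P.eval t * t ^ 2) 0 0 := by
          have := (P.hasDerivAt 0).fun_mul (hasDerivAt_pow 2 0)
          simpa using this
        simpa using (a1.const_add 1).fun_add a2
      have d2 : HasDerivAt (fun t : ℝ => (1 + t * u) ^ d) (d * u) 0 := by
        have b1 : HasDerivAt (fun t : ℝ => 1 + t * u) u 0 :=
          ((hasDerivAt_id 0).mul_const u).const_add 1 |>.congr_deriv (by ring)
        have := b1.fun_pow d
        simpa using this
      simpa using d1.fun_sub d2
    have hslope := hasDerivAt_iff_tendsto_slope.mp hder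
    have hpos : (0:ℝ) < H.trace - d * u := by linarith
    have hev1 : ∀ᶠ t in nhdsWithin 0 (Set.Ioi (0:ℝ)), 0 < slope g 0 t := by
      refine Filter.Eventually.filter_mono (nhdsWithin_mono 0 ?_) (hslope.eventually_const_lt hpos)
      intro t ht
      exact ne_of_gt ht
    have hev2 : ∀ᶠ t in nhdsWithin 0 (Set.Ioi (0:ℝ)), t * C < 1 := by
      refine Filter.Eventually.filter_mono nhdsWithin_le_nhds ?_
      have : Filter.Tendsto (fun t : ℝ => t * C) (nhds 0) (nhds 0) := by
        simpa using (continuous_id.fun_mul continuous_const).tendsto (0:ℝ)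
      exact this.eventually_lt_const one_pos
    have hev3 : ∀ᶠ t in nhdsWithin 0 (Set.Ioi (0:ℝ)), 0 < 1 + t * u := by
      refine Filter.Eventually.filter_mono nhdsWithin_le_nhds ?_
      have h : Filter.Tendsto (fun t : ℝ => 1 + t * u) (nhds 0) (nhds (1 + 0 * u)) :=
        Continuous.tendsto (f := fun t : ℝ => 1 + t * u) (by fun_prop) 0
      rw [zero_mul, add_zero] at h
      exact h.eventually_const_lt one_pos
    have hev4 : ∀ᶠ t in nhdsWithin 0 (Set.Ioi (0:ℝ)), 0 < t :=
      eventually_mem_nhdsWithin.mono fun t ht => ht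
    obtain ⟨t, h1, h2, h3, h4⟩ := (hev2.and (hev3.and (hev4.and hev1))).exists
    refine ⟨t, h1, h2, h3, ?_⟩
    rw [slope_def_field, hg0, sub_zero, sub_zero] at h4
    have hgt : 0 < g t := by
      calc (0:ℝ) < (g t / t) * t := mul_pos h4 h3
        _ = g t := div_mul_cancel₀ _ (ne_of_gt h3)
    rw [hφ t]
    rw [hg] at hgt
    simp only at hgt
    linarith
  -- construct the better ellipsoid
  set Q : Matrix (Fin d) (Fin d) ℝ := (1 + t * u)⁻¹ • (1 + t • H) with hQ
  have hdot : ∀ x : Fin d → ℝ,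
      dotProduct x (Q.mulVec x) = (1 + t * u)⁻¹ * ((∑ i, x i ^ 2) + t * dotProduct x (H.mulVec x)) := by
    intro x
    rw [hQ, smul_mulVec, dotProduct_smul, smul_eq_mul]
    congr 1
    rw [add_mulVec, one_mulVec, smul_mulVec, dotProduct_add, dotProduct_smul, smul_eq_mul]
    congr 1
    simp [dotProduct, sq]
  have hHerm : H.IsHermitian := by
    rw [Matrix.IsHermitian]
    ext i j
    simp only [conjTranspose_apply, hH, of_apply, star_trivial]
    ring
  have hQposdef : Q.PosDef := by
    refine posDef_iff_dotProduct_mulVec.mpr ⟨?_, ?_⟩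
    · show Qᴴ = Q
      rw [hQ, conjTranspose_smul, conjTranspose_add, conjTranspose_one, conjTranspose_smul,
        hHerm]
      simp only [star_trivial]
    · intro x hx
      have hs : 0 < ∑ i, x i ^ 2 := by
        have hne : ∃ i, x i ≠ 0 := by
          by_contra h
          push_neg at h
          exact hx (funext h)
        obtain ⟨i, hi⟩ := hne
        refine Finset.sum_pos' (fun k _ => sq_nonneg _) ⟨i, Finset.mem_univ i, ?_⟩
        positivity
      rw [star_trivial, hdot x]
      have hb := hCb x
      have h1 : -(C * ∑ i, x i ^ 2) ≤ dotProduct x (H.mulVec x) := neg_le_of_abs_le hb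
      have h2 : (∑ i, x i ^ 2) + t * dotProduct x (H.mulVec x)
          ≥ (∑ i, x i ^ 2) * (1 - t * C) := by
        have := mul_le_mul_of_nonneg_left h1 (le_of_lt ht0)
        nlinarith
      have h3 : 0 < (∑ i, x i ^ 2) * (1 - t * C) := mul_pos hs (by linarith)
      exact mul_pos (inv_pos.mpr htu) (by linarith)
  have hQle : ∀ x ∈ B, dotProduct x (Q.mulVec x) ≤ 1 := by
    intro x hxB
    rw [hdot x]
    have hq : dotProduct x (H.mulVec x) < u := by
      rw [hquad x]
      exact hu1 (f x) (subset_convexHull ℝ _ ⟨x, hxB, rfl⟩)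
    have h1 : (∑ i, x i ^ 2) + t * dotProduct x (H.mulVec x) ≤ 1 + t * u := by
      have := hball x hxB
      nlinarith
    rw [inv_mul_le_iff₀ htu, mul_one]
    exact h1
  have hdet : 1 < Q.det := by
    rw [hQ, Matrix.det_smul]
    have hcard : Fintype.card (Fin d) = d := Fintype.card_fin d
    rw [hcard]
    have h1 : ((1 + t * u)⁻¹) ^ d * (1 + t * u) ^ d = 1 := by
      rw [← mul_pow, inv_mul_cancel₀ (ne_of_gt htu), one_pow]
    calc (1:ℝ) = ((1 + t * u)⁻¹) ^ d * (1 + t * u) ^ d := h1.symm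
      _ < ((1 + t * u)⁻¹) ^ d * (1 + t • H).det := by
          refine mul_lt_mul_of_pos_left htg ?_
          exact pow_pos (inv_pos.mpr htu) d
  exact absurd (hmin Q hQposdef hQle) (not_le.mpr hdet)


theorem stmt2 (d : ℕ) (hd : 0 < d) (B : Set (Fin d → ℝ)) (hB : IsCompact B)
    (hspan : Submodule.span ℝ B = ⊤)
    (hball : ∀ x ∈ B, ∑ i, x i ^ 2 ≤ 1)
    (hmin : ∀ Q : Matrix (Fin d) (Fin d) ℝ, Q.PosDef →
      (∀ x ∈ B, dotProduct x (Q.mulVec x) ≤ 1) → Q.det ≤ 1) :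
    ∃ X : Finset (Fin d → ℝ), ↑X ⊆ B ∧
      ∃ α : (Fin d → ℝ) → ℝ, (∀ x ∈ X, 0 ≤ α x) ∧ (∑ x ∈ X, α x = 1) ∧
        (∑ x ∈ X, α x • Matrix.vecMulVec x x) =
          ((1 : ℝ) / d) • (1 : Matrix (Fin d) (Fin d) ℝ) := by
  classical
  have hmem := john_mem d hd B hB hball hmin
  rw [_root_.convexHull_eq] at hmem
  simp only [Set.mem_setOf_eq] at hmem
  obtain ⟨ι, t, w, z, hw0, hw1, hz, hcm⟩ := hmem
  rw [Finset.centerMass_eq_of_sum_1 _ _ hw1] at hcm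
  have hz' : ∀ i ∈ t, ∃ x, x ∈ B ∧ Matrix.vecMulVec x x = z i := by
    intro i hi
    obtain ⟨x, hxB, hfx⟩ := hz i hi
    exact ⟨x, hxB, hfx⟩
  choose! b hbB hfb using hz'
  refine ⟨t.image b, ?_, fun x => ∑ i ∈ t.filter (fun i => b i = x), w i, ?_, ?_, ?_⟩
  · intro x hx
    simp only [Finset.coe_image, Set.mem_image, Finset.mem_coe] at hx
    obtain ⟨i, hi, rfl⟩ := hx
    exact hbB i hi
  · intro x _
    exact Finset.sum_nonneg fun i hi => hw0 i (Finset.mem_filter.mp hi).1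
  · exact (Finset.sum_image' (g := b) w fun c _ => rfl).trans hw1
  · refine (Finset.sum_image' (g := b) (fun i => w i • z i) ?_).trans hcm
    intro c hc
    rw [Finset.sum_smul]
    refine Finset.sum_congr rfl fun j hj => ?_
    obtain ⟨hjt, hbj⟩ := Finset.mem_filter.mp hj
    rw [← hbj, hfb j hjt]
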